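/- Let T > 0, let R₁, R₂ : [0,T] → ℝ³ be continuous, and let Q₁, Q₂ : [0,T] → 3×3 real matrices be differentiable with Q_i'(t) = Q_i(t) A(R_i(t)) and Q_i(0) = Id for i = 1,2. Set M = sup_{t∈[0,T]} |R₁(t)| and δ = sup_{t∈[0,T]} |R₁(t) − R₂(t)|. Then for every t ∈ [0,T], ‖Q₁(t) − Q₂(t)‖ ≤ δ · t · e^{Mt}, where ‖·‖ denotes the operator norm on 3×3 real matrices and |·| the Euclidean norm on ℝ³. -/

import Mathlib

noncomputable section

open Set Matrix
open scoped Matrix.Norms.L2Operator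

/-- We identify ℝ³ with `EuclideanSpace ℝ (Fin 3)`. -/
local notation "E3" => EuclideanSpace ℝ (Fin 3)

/-- The skew-symmetric matrix `A(ω)` with `A(ω)x = ω × x`. -/
def Amat (w : E3) : Matrix (Fin 3) (Fin 3) ℝ :=
  !![0, -w 2, w 1; w 2, 0, -w 0; -w 1, w 0, 0]

lemma Amat_norm_le (w : E3) : ‖Amat w‖ ≤ ‖w‖ := by
  rw [Matrix.l2_opNorm_def]
  refine ContinuousLinearMap.opNorm_le_bound _ (norm_nonneg w) fun x => ?_
  have hx : ∀ y : E3, ‖y‖ = Real.sqrt (y 0 ^ 2 + y 1 ^ 2 + y 2 ^ 2) := by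
    intro y
    rw [EuclideanSpace.norm_eq]
    simp [Fin.sum_univ_three, Real.norm_eq_abs, sq_abs]
  have happ : ((Matrix.toEuclideanLin.trans LinearMap.toContinuousLinearMap) (Amat w) x : E3)
      = (WithLp.equiv 2 (Fin 3 → ℝ)).symm ((Amat w) *ᵥ (WithLp.equiv 2 (Fin 3 → ℝ) x)) := rfl
  rw [happ, hx, hx, hx]
  set y : E3 := (WithLp.equiv 2 (Fin 3 → ℝ)).symm ((Amat w) *ᵥ (WithLp.equiv 2 (Fin 3 → ℝ) x))
  have e0 : y 0 = -(w 2) * x 1 + w 1 * x 2 := by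
    simp [y, Amat, Matrix.mulVec, dotProduct, Fin.sum_univ_three]
  have e1 : y 1 = w 2 * x 0 + -(w 0) * x 2 := by
    simp [y, Amat, Matrix.mulVec, dotProduct, Fin.sum_univ_three]
  have e2 : y 2 = -(w 1) * x 0 + w 0 * x 1 := by
    simp [y, Amat, Matrix.mulVec, dotProduct, Fin.sum_univ_three]
  rw [e0, e1, e2, ← Real.sqrt_mul (by positivity)]
  apply Real.sqrt_le_sqrt
  nlinarith [sq_nonneg (w 0 * x 0 + w 1 * x 1 + w 2 * x 2)]

lemma Amat_transpose (w : E3) : (Amat w)ᵀ = -(Amat w) := by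
  ext i j
  fin_cases i <;> fin_cases j <;> simp [Amat]

lemma Amat_sub (w v : E3) : Amat w - Amat v = Amat (w - v) := by
  ext i j
  fin_cases i <;> fin_cases j <;> simp [Amat, PiLp.sub_apply] <;> ring

def matCLE : Matrix (Fin 3) (Fin 3) ℝ ≃L[ℝ] (Fin 3 → Fin 3 → ℝ) :=
  LinearEquiv.toContinuousLinearEquiv
    (LinearEquiv.refl ℝ (Matrix (Fin 3) (Fin 3) ℝ) :
      Matrix (Fin 3) (Fin 3) ℝ ≃ₗ[ℝ] (Fin 3 → Fin 3 → ℝ))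

lemma hasDerivWithinAt_matrix {Q : ℝ → Matrix (Fin 3) (Fin 3) ℝ} {Q' : Matrix (Fin 3) (Fin 3) ℝ}
    {s : Set ℝ} {t : ℝ}
    (h : ∀ i j, HasDerivWithinAt (fun τ => Q τ i j) (Q' i j) s t) :
    HasDerivWithinAt Q Q' s t := by
  have h1 : HasDerivWithinAt (fun τ => (matCLE (Q τ))) (matCLE Q') s t := by
    rw [hasDerivWithinAt_pi]
    intro i
    rw [hasDerivWithinAt_pi]
    intro j
    exact h i j
  have := matCLE.symm.hasFDerivAt.comp_hasDerivWithinAt t h1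
  exact this

lemma icc_mem_nhdsWithin_Ici {T x : ℝ} (hx : x ∈ Ico (0:ℝ) T) :
    Icc (0:ℝ) T ∈ nhdsWithin x (Ici x) := by
  refine Filter.mem_of_superset
    (Filter.inter_mem self_mem_nhdsWithin
      (mem_nhdsWithin_of_mem_nhds (Iio_mem_nhds hx.2))) ?_
  rintro y ⟨h1, h2⟩
  exact ⟨le_trans hx.1 h1, le_of_lt h2⟩

lemma norm_Q_eq_one (T : ℝ) (hT : 0 < T) (R : ℝ → E3) (C : ℝ)
    (hRC : ∀ t ∈ Icc (0:ℝ) T, ‖R t‖ ≤ C)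
    (Q : ℝ → Matrix (Fin 3) (Fin 3) ℝ) (hQ0 : Q 0 = 1)
    (hQ : ∀ t ∈ Icc (0:ℝ) T, ∀ i j,
      HasDerivWithinAt (fun s => Q s i j) ((Q t * Amat (R t)) i j) (Icc (0:ℝ) T) t) :
    ∀ t ∈ Icc (0:ℝ) T, ‖Q t‖ = 1 := by
  have hC : 0 ≤ C := le_trans (norm_nonneg _) (hRC 0 ⟨le_refl 0, hT.le⟩)
  set G : ℝ → Matrix (Fin 3) (Fin 3) ℝ := fun s => (Q s)ᵀ * Q s - 1 with hGdef
  set G' : ℝ → Matrix (Fin 3) (Fin 3) ℝ :=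
    fun s => G s * Amat (R s) - Amat (R s) * G s with hG'def
  have hQm : ∀ t ∈ Icc (0:ℝ) T,
      HasDerivWithinAt Q (Q t * Amat (R t)) (Icc (0:ℝ) T) t :=
    fun t ht => hasDerivWithinAt_matrix (hQ t ht)
  have hQTm : ∀ t ∈ Icc (0:ℝ) T,
      HasDerivWithinAt (fun s => (Q s)ᵀ) ((Q t * Amat (R t))ᵀ) (Icc (0:ℝ) T) t :=
    fun t ht => hasDerivWithinAt_matrix (fun i j => hQ t ht j i)
  have key : ∀ t, (Q t * Amat (R t))ᵀ * Q t + (Q t)ᵀ * (Q t * Amat (R t)) = G' t := by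
    intro t
    simp only [hG'def, hGdef, Matrix.transpose_mul, Amat_transpose]
    noncomm_ring
  have hG : ∀ t ∈ Icc (0:ℝ) T, HasDerivWithinAt G (G' t) (Icc (0:ℝ) T) t := by
    intro t ht
    have := ((hQTm t ht).mul (hQm t ht)).sub_const 1
    rwa [key t] at this
  have hGc : ContinuousOn G (Icc 0 T) := fun x hx => (hG x hx).continuousWithinAt
  have hG0 : G 0 = 0 := by simp [hGdef, hQ0]
  have hbound : ∀ x ∈ Ico (0:ℝ) T, ‖G' x‖ ≤ (2 * C) * ‖G x‖ + 0 := by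
    intro x hx
    have hx' : x ∈ Icc (0:ℝ) T := ⟨hx.1, hx.2.le⟩
    have hA : ‖Amat (R x)‖ ≤ C := le_trans (Amat_norm_le _) (hRC x hx')
    have h1 : ‖G x * Amat (R x)‖ ≤ ‖G x‖ * ‖Amat (R x)‖ := Matrix.l2_opNorm_mul _ _
    have h2 : ‖Amat (R x) * G x‖ ≤ ‖Amat (R x)‖ * ‖G x‖ := Matrix.l2_opNorm_mul _ _
    have h3 : ‖G' x‖ ≤ ‖G x * Amat (R x)‖ + ‖Amat (R x) * G x‖ := norm_sub_le _ _
    have h4 : (0:ℝ) ≤ ‖G x‖ := norm_nonneg _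
    have h5 : (0:ℝ) ≤ ‖Amat (R x)‖ := norm_nonneg _
    nlinarith
  have hgron := norm_le_gronwallBound_of_norm_deriv_right_le (δ := 0) (K := 2*C) (ε := 0) hGc
    (fun x hx => (hG x ⟨hx.1, hx.2.le⟩).mono_of_mem_nhdsWithin (icc_mem_nhdsWithin_Ici hx))
    (by simp [hG0]) hbound
  have hGzero : ∀ t ∈ Icc (0:ℝ) T, G t = 0 := by
    intro t ht
    have := hgron t ht
    rw [gronwallBound_ε0_δ0] at this
    exact norm_le_zero_iff.mp this
  intro t ht
  have hQQ : (Q t)ᵀ * Q t = 1 := by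
    have := hGzero t ht
    simpa [hGdef, sub_eq_zero] using this
  have hstar : star (Q t) * Q t = 1 := by
    rwa [Matrix.star_eq_conjTranspose, Matrix.conjTranspose_eq_transpose_of_trivial]
  exact CStarRing.norm_of_mem_unitary ⟨hstar, mul_eq_one_comm.mp hstar⟩

/-- Let `T > 0`, `R₁, R₂ : [0,T] → ℝ³` continuous, and let
`Q₁, Q₂ : [0,T] → M₃(ℝ)` be differentiable with `Qᵢ'(t) = Qᵢ(t) A(Rᵢ(t))`, `Qᵢ(0) = Id`.
Set `M = sup_t |R₁(t)|` and `δ = sup_t |R₁(t) − R₂(t)|`.  Then for every `t ∈ [0,T]`,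
`‖Q₁(t) − Q₂(t)‖ ≤ δ · t · e^{Mt}` in the operator norm on 3×3 matrices. -/
theorem statement19
    (T : ℝ) (hT : 0 < T)
    (R₁ R₂ : ℝ → E3)
    (hR₁ : ContinuousOn R₁ (Icc 0 T)) (hR₂ : ContinuousOn R₂ (Icc 0 T))
    (Q₁ Q₂ : ℝ → Matrix (Fin 3) (Fin 3) ℝ)
    (hQ₁0 : Q₁ 0 = 1) (hQ₂0 : Q₂ 0 = 1)
    (hQ₁ode : ∀ t ∈ Icc (0:ℝ) T, ∀ i j,
      HasDerivWithinAt (fun s => Q₁ s i j) ((Q₁ t * Amat (R₁ t)) i j) (Icc (0:ℝ) T) t)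
    (hQ₂ode : ∀ t ∈ Icc (0:ℝ) T, ∀ i j,
      HasDerivWithinAt (fun s => Q₂ s i j) ((Q₂ t * Amat (R₂ t)) i j) (Icc (0:ℝ) T) t)
    (M : ℝ) (hM : IsLUB {d : ℝ | ∃ t ∈ Icc (0:ℝ) T, d = ‖R₁ t‖} M)
    (δ : ℝ) (hδ : IsLUB {d : ℝ | ∃ t ∈ Icc (0:ℝ) T, d = ‖R₁ t - R₂ t‖} δ) :
    ∀ t ∈ Icc (0:ℝ) T, ‖Q₁ t - Q₂ t‖ ≤ δ * t * Real.exp (M * t) := by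
  have hMb : ∀ t ∈ Icc (0:ℝ) T, ‖R₁ t‖ ≤ M := fun t ht => hM.1 ⟨t, ht, rfl⟩
  have hδb : ∀ t ∈ Icc (0:ℝ) T, ‖R₁ t - R₂ t‖ ≤ δ := fun t ht => hδ.1 ⟨t, ht, rfl⟩
  have h0T : (0:ℝ) ∈ Icc (0:ℝ) T := ⟨le_refl 0, hT.le⟩
  have hM0 : 0 ≤ M := le_trans (norm_nonneg _) (hMb 0 h0T)
  have hδ0 : 0 ≤ δ := le_trans (norm_nonneg _) (hδb 0 h0T)
  have hR₂b : ∀ t ∈ Icc (0:ℝ) T, ‖R₂ t‖ ≤ M + δ := by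
    intro t ht
    have h := norm_sub_le (R₁ t) (R₁ t - R₂ t)
    simp only [sub_sub_cancel] at h
    exact le_trans h (add_le_add (hMb t ht) (hδb t ht))
  have hQ₂norm : ∀ t ∈ Icc (0:ℝ) T, ‖Q₂ t‖ = 1 :=
    norm_Q_eq_one T hT R₂ (M + δ) hR₂b Q₂ hQ₂0 hQ₂ode
  set f : ℝ → Matrix (Fin 3) (Fin 3) ℝ := fun s => Q₁ s - Q₂ s with hfdef
  set f' : ℝ → Matrix (Fin 3) (Fin 3) ℝ :=
    fun s => f s * Amat (R₁ s) + Q₂ s * (Amat (R₁ s) - Amat (R₂ s)) with hf'def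
  have hf : ∀ t ∈ Icc (0:ℝ) T, HasDerivWithinAt f (f' t) (Icc (0:ℝ) T) t := by
    intro t ht
    have h1 := (hasDerivWithinAt_matrix (hQ₁ode t ht)).sub
      (hasDerivWithinAt_matrix (hQ₂ode t ht))
    have key : Q₁ t * Amat (R₁ t) - Q₂ t * Amat (R₂ t) = f' t := by
      simp only [hf'def, hfdef]
      noncomm_ring
    rwa [key] at h1
  have hfc : ContinuousOn f (Icc 0 T) := fun x hx => (hf x hx).continuousWithinAt
  have hbound : ∀ x ∈ Ico (0:ℝ) T, ‖f' x‖ ≤ M * ‖f x‖ + δ := by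
    intro x hx
    have hx' : x ∈ Icc (0:ℝ) T := ⟨hx.1, hx.2.le⟩
    have hA1 : ‖Amat (R₁ x)‖ ≤ M := le_trans (Amat_norm_le _) (hMb x hx')
    have hA12 : ‖Amat (R₁ x) - Amat (R₂ x)‖ ≤ δ := by
      rw [Amat_sub]
      exact le_trans (Amat_norm_le _) (hδb x hx')
    have h1 : ‖f x * Amat (R₁ x)‖ ≤ ‖f x‖ * ‖Amat (R₁ x)‖ := Matrix.l2_opNorm_mul _ _
    have h2 : ‖Q₂ x * (Amat (R₁ x) - Amat (R₂ x))‖ ≤ ‖Q₂ x‖ * ‖Amat (R₁ x) - Amat (R₂ x)‖ :=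
      Matrix.l2_opNorm_mul _ _
    have h3 : ‖f' x‖ ≤ ‖f x * Amat (R₁ x)‖ + ‖Q₂ x * (Amat (R₁ x) - Amat (R₂ x))‖ :=
      norm_add_le _ _
    have h4 : (0:ℝ) ≤ ‖f x‖ := norm_nonneg _
    have h5 : (0:ℝ) ≤ ‖Amat (R₁ x)‖ := norm_nonneg _
    have h6 : (0:ℝ) ≤ ‖Amat (R₁ x) - Amat (R₂ x)‖ := norm_nonneg _
    have h7 := hQ₂norm x hx'
    nlinarith
  have hgron := norm_le_gronwallBound_of_norm_deriv_right_le (δ := 0) (K := M) (ε := δ) hfc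
    (fun x hx => (hf x ⟨hx.1, hx.2.le⟩).mono_of_mem_nhdsWithin (icc_mem_nhdsWithin_Ici hx))
    (by simp [hfdef, hQ₁0, hQ₂0]) hbound
  intro t ht
  have h := hgron t ht
  rw [sub_zero] at h
  refine le_trans h ?_
  have ht0 : 0 ≤ t := ht.1
  rcases eq_or_ne M 0 with hMz | hMz
  · subst hMz
    rw [gronwallBound_K0]
    simp [ht0]
  · have hMpos : 0 < M := lt_of_le_of_ne hM0 (Ne.symm hMz)
    rw [gronwallBound_of_K_ne_0 hMz]
    have hE := Real.exp_pos (M * t)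
    have hexp : Real.exp (M * t) * (1 - M * t) ≤ 1 := by
      have h1 := Real.add_one_le_exp (-(M * t))
      rw [Real.exp_neg] at h1
      have := mul_le_mul_of_nonneg_left h1 hE.le
      rw [mul_inv_cancel₀ hE.ne'] at this
      nlinarith
    simp only [zero_mul, zero_add]
    rw [div_mul_eq_mul_div, div_le_iff₀ hMpos]
    nlinarith [mul_nonneg hδ0 ht0, mul_nonneg (mul_nonneg hδ0 ht0) hE.le]
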